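/- Let ≺ be a strict total order on ℤ, let p,q ∈ ℤ², and let r,s ∈ S_≺(p,q). Then H(\overline{rs}, S_≺(r,s)) ≤ 2·H(\overline{pq}, S_≺(p,q)). -/

import Mathlib

/- `upAt prec p q t` : the level `t` is among the `q.2 - p.2` greatest elements
(w.r.t. the order `prec`) of the segment interval `[p.1+p.2, q.1+q.2-1]`. -/
open Classical in
noncomputable def upAt (prec : ℤ → ℤ → Prop) (p q : ℤ × ℤ) (t : ℤ) : Prop :=
  (((Finset.Ico (p.1 + p.2) (q.1 + q.2)).filter (fun u => u = t ∨ prec t u)).card : ℤ)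
    ≤ q.2 - p.2

/- The digital segment derived from `prec`, for `p.1 ≤ q.1` and `p.2 ≤ q.2`:
the monotone staircase from `p` to `q` that goes up at level `t` exactly when
`upAt prec p q t` holds. -/
open Classical in
noncomputable def digSegNE (prec : ℤ → ℤ → Prop) (p q : ℤ × ℤ) : Set (ℤ × ℤ) :=
  { r | p.1 + p.2 ≤ r.1 + r.2 ∧ r.1 + r.2 ≤ q.1 + q.2 ∧
    r.2 = p.2 + (((Finset.Ico (p.1 + p.2) (r.1 + r.2)).filter (fun t => upAt prec p q t)).card : ℤ) }

/- The digital segment for `p.1 ≤ q.1` (reflecting over the `y`-axis if `p.2 > q.2`). -/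
noncomputable def digSegAux (prec : ℤ → ℤ → Prop) (p q : ℤ × ℤ) : Set (ℤ × ℤ) :=
  if p.2 ≤ q.2 then digSegNE prec p q
  else (fun r : ℤ × ℤ => (-r.1, r.2)) '' digSegNE prec (-q.1, q.2) (-p.1, p.2)

/- The full system of digital segments `S_≺` derived from the order `prec`. -/
noncomputable def digSeg (prec : ℤ → ℤ → Prop) (p q : ℤ × ℤ) : Set (ℤ × ℤ) :=
  if p.1 ≤ q.1 then digSegAux prec p q else digSegAux prec q p

/- Adjacency in the grid graph on `ℤ²`. -/
def GridAdj (p q : ℤ × ℤ) : Prop :=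
  (|q.1 - p.1| = 1 ∧ q.2 = p.2) ∨ (q.1 = p.1 ∧ |q.2 - p.2| = 1)

/- `S` is the vertex set of a path from `p` to `q` in the grid graph on `ℤ²`. -/
def IsGridPath (p q : ℤ × ℤ) (S : Set (ℤ × ℤ)) : Prop :=
  ∃ n : ℕ, ∃ f : Fin (n + 1) → ℤ × ℤ, f 0 = p ∧ f (Fin.last n) = q ∧
    Function.Injective f ∧ (∀ i : Fin n, GridAdj (f i.castSucc) (f i.succ)) ∧
    Set.range f = S

/- A consistent digital line segments system (CDS): axioms (S1)-(S5). -/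
structure IsCDS (S : ℤ × ℤ → ℤ × ℤ → Set (ℤ × ℤ)) : Prop where
  path : ∀ p q, IsGridPath p q (S p q)                     -- (S1)
  symm : ∀ p q, S p q = S q p                               -- (S2)
  subseg : ∀ p q r, r ∈ S p q → S p r ⊆ S p q               -- (S3)
  prolong : ∀ p q, ∃ r, r ∉ S p q ∧ S p q ⊆ S p r           -- (S4)
  monoV : ∀ p q, p.1 = q.1 → ∀ r ∈ S p q, r.1 = p.1         -- (S5), vertical
  monoH : ∀ p q, p.2 = q.2 → ∀ r ∈ S p q, r.2 = p.2         -- (S5), horizontal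

/- The inclusion `ℤ² ⊆ ℝ²` (Euclidean plane). -/
noncomputable def toR2 (p : ℤ × ℤ) : EuclideanSpace ℝ (Fin 2) := WithLp.toLp 2 ![(p.1 : ℝ), (p.2 : ℝ)]

/- The 2-adic valuation of an integer, with `v2 0 = ⊤`. -/
noncomputable def v2 (k : ℤ) : ℕ∞ := if k = 0 then ⊤ else (padicValInt 2 k : ℕ∞)

/- The total order on `ℤ` defined via 2-adic valuations. -/
def vorder (a b : ℤ) : Prop :=
  ∃ i : ℕ, v2 (a - i) < v2 (b - i) ∧ ∀ j : ℕ, j < i → v2 (a - j) = v2 (b - j)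

open Classical in
noncomputable def rk (prec : ℤ → ℤ → Prop) (I : Finset ℤ) (t : ℤ) : ℕ :=
  (I.filter (fun u => u = t ∨ prec t u)).card

open Classical in
noncomputable def cnt (prec : ℤ → ℤ → Prop) (p q : ℤ × ℤ) (w : ℤ) : ℕ :=
  ((Finset.Ico (p.1 + p.2) w).filter (fun t => upAt prec p q t)).card

lemma upAt_iff (prec : ℤ → ℤ → Prop) (p q : ℤ × ℤ) (t : ℤ) :
    upAt prec p q t ↔ (rk prec (Finset.Ico (p.1 + p.2) (q.1 + q.2)) t : ℤ) ≤ q.2 - p.2 :=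
  Iff.rfl

lemma mem_digSegNE (prec : ℤ → ℤ → Prop) (p q a : ℤ × ℤ) :
    a ∈ digSegNE prec p q ↔
      p.1 + p.2 ≤ a.1 + a.2 ∧ a.1 + a.2 ≤ q.1 + q.2 ∧
        a.2 = p.2 + (cnt prec p q (a.1 + a.2) : ℤ) :=
  Iff.rfl



section Rank
variable (prec : ℤ → ℤ → Prop) [IsStrictTotalOrder ℤ prec]

open Classical Finset

lemma rk_anti {t u : ℤ} (I : Finset ℤ) (h : u = t ∨ prec t u) :
    rk prec I u ≤ rk prec I t := by
  apply Finset.card_le_card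
  apply Finset.monotone_filter_right
  intro w _ hw
  rcases hw with rfl | hw
  · exact h
  · rcases h with rfl | h
    · exact Or.inr hw
    · exact Or.inr (trans_of prec h hw)

lemma rk_strict {t u : ℤ} (I : Finset ℤ) (h : prec t u) (ht : t ∈ I) :
    rk prec I u < rk prec I t := by
  apply Finset.card_lt_card
  constructor
  · apply Finset.monotone_filter_right
    intro w _ hw
    rcases hw with rfl | hw
    · exact Or.inr h
    · exact Or.inr (trans_of prec h hw)
  · intro hsub
    have htmem : t ∈ I.filter (fun w => w = t ∨ prec t w) := by
      simp [ht]
    have := hsub htmem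
    simp only [Finset.mem_filter] at this
    rcases this.2 with rfl | hh
    · exact irrefl_of prec t h
    · exact irrefl_of prec t (trans_of prec h hh)

lemma rk_pos {t : ℤ} (I : Finset ℤ) (ht : t ∈ I) : 1 ≤ rk prec I t := by
  have : t ∈ I.filter (fun u => u = t ∨ prec t u) := by simp [ht]
  exact Finset.card_pos.mpr ⟨t, this⟩

lemma rk_le_card (I : Finset ℤ) (t : ℤ) : rk prec I t ≤ I.card :=
  Finset.card_le_card (Finset.filter_subset _ _)

lemma rk_injOn (I : Finset ℤ) : Set.InjOn (rk prec I) I := by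
  intro t ht u hu h
  rcases trichotomous_of prec t u with hh | rfl | hh
  · exact absurd h (Nat.ne_of_gt (rk_strict prec I hh ht))
  · rfl
  · exact absurd h.symm (Nat.ne_of_gt (rk_strict prec I hh hu))

lemma card_rk_le (I : Finset ℤ) (k : ℕ) :
    (I.filter (fun t => rk prec I t ≤ k)).card = min k I.card := by
  have himg : I.image (rk prec I) = Finset.Icc 1 I.card := by
    apply Finset.eq_of_subset_of_card_le
    · intro x hx
      simp only [Finset.mem_image] at hx
      obtain ⟨t, ht, rfl⟩ := hx
      simp only [Finset.mem_Icc]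
      exact ⟨rk_pos prec I ht, rk_le_card prec I t⟩
    · rw [Finset.card_image_of_injOn (rk_injOn prec I), Nat.card_Icc]
      omega
  have h1 : (I.filter (fun t => rk prec I t ≤ k)).card
      = ((I.filter (fun t => rk prec I t ≤ k)).image (rk prec I)).card := by
    rw [Finset.card_image_of_injOn ((rk_injOn prec I).mono (by
      intro x hx; exact Finset.mem_coe.mpr (Finset.mem_of_mem_filter _ hx)))]
  rw [h1, ← Finset.filter_image (f := rk prec I) (p := fun x => x ≤ k), himg]
  have : (Finset.Icc 1 I.card).filter (fun x => x ≤ k) = Finset.Icc 1 (min k I.card) := by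
    ext x
    simp only [Finset.mem_filter, Finset.mem_Icc]
    omega
  rw [this, Nat.card_Icc]
  omega

lemma upset_eq (I U : Finset ℤ) (hUI : U ⊆ I)
    (hup : ∀ u ∈ U, ∀ v ∈ I, (v = u ∨ prec u v) → v ∈ U) :
    U = I.filter (fun t => rk prec I t ≤ U.card) := by
  apply Finset.Subset.antisymm
  · intro t ht
    simp only [Finset.mem_filter]
    refine ⟨hUI ht, ?_⟩
    apply Finset.card_le_card
    intro w hw
    simp only [Finset.mem_filter] at hw
    exact hup t ht w hw.1 hw.2
  · intro t ht
    simp only [Finset.mem_filter] at ht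
    by_contra htU
    have hsub : insert t U ⊆ I.filter (fun u => u = t ∨ prec t u) := by
      intro w hw
      rcases Finset.mem_insert.mp hw with rfl | hwU
      · simp [ht.1]
      · simp only [Finset.mem_filter]
        refine ⟨hUI hwU, ?_⟩
        rcases trichotomous_of prec t w with hh | rfl | hh
        · exact Or.inr hh
        · exact absurd hwU htU
        · exact absurd (hup w hwU t ht.1 (Or.inr hh)) htU
    have := Finset.card_le_card hsub
    rw [Finset.card_insert_of_notMem htU] at this
    have h2 := ht.2
    unfold rk at h2
    omega

end Rank

section Stair
variable (prec : ℤ → ℤ → Prop) [IsStrictTotalOrder ℤ prec]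
open Classical Finset

lemma cnt_mono (p q : ℤ × ℤ) {w w' : ℤ} (h : w ≤ w') : cnt prec p q w ≤ cnt prec p q w' := by
  apply Finset.card_le_card
  apply Finset.filter_subset_filter
  exact Finset.Ico_subset_Ico le_rfl h

lemma cnt_split (p q : ℤ × ℤ) {w w' : ℤ} (h1 : p.1 + p.2 ≤ w) (h2 : w ≤ w') :
    cnt prec p q w' = cnt prec p q w
      + ((Finset.Ico w w').filter (fun t => upAt prec p q t)).card := by
  unfold cnt
  rw [← Finset.card_union_of_disjoint, ← Finset.filter_union,
    Finset.Ico_union_Ico_eq_Ico h1 h2]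
  exact Finset.disjoint_filter_filter (Finset.Ico_disjoint_Ico_consecutive _ _ _)

lemma cnt_le (p q : ℤ × ℤ) {w w' : ℤ} (h1 : p.1 + p.2 ≤ w) (h2 : w ≤ w') :
    (cnt prec p q w' : ℤ) - cnt prec p q w ≤ w' - w := by
  rw [cnt_split prec p q h1 h2]
  push_cast
  have := Finset.card_le_card (Finset.filter_subset (fun t => upAt prec p q t) (Finset.Ico w w'))
  rw [Int.card_Ico] at this
  omega

lemma cnt_full {p q : ℤ × ℤ} (hx : p.1 ≤ q.1) (hy : p.2 ≤ q.2) :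
    (cnt prec p q (q.1 + q.2) : ℤ) = q.2 - p.2 := by
  unfold cnt
  set I := Finset.Ico (p.1 + p.2) (q.1 + q.2) with hI
  have hcard : I.card = (q.1 + q.2 - (p.1 + p.2)).toNat := Int.card_Ico _ _
  have hfc : I.filter (fun t => upAt prec p q t)
      = I.filter (fun t => rk prec I t ≤ (q.2 - p.2).toNat) := by
    apply Finset.filter_congr
    intro t _
    rw [upAt_iff, ← hI]
    omega
  rw [hfc, card_rk_le prec I, hcard]
  omega

lemma start_mem_digSegNE {p q : ℤ × ℤ} (h : p.1 + p.2 ≤ q.1 + q.2) : p ∈ digSegNE prec p q := by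
  rw [mem_digSegNE]
  refine ⟨le_rfl, h, ?_⟩
  unfold cnt
  simp [Finset.Ico_self]

lemma end_mem_digSegNE {p q : ℤ × ℤ} (hx : p.1 ≤ q.1) (hy : p.2 ≤ q.2) :
    q ∈ digSegNE prec p q := by
  rw [mem_digSegNE]
  exact ⟨by omega, le_rfl, by rw [cnt_full prec hx hy]; ring⟩

lemma digSegNE_mono {p q a b : ℤ × ℤ} (ha : a ∈ digSegNE prec p q) (hb : b ∈ digSegNE prec p q)
    (hab : a.1 + a.2 ≤ b.1 + b.2) : a.1 ≤ b.1 ∧ a.2 ≤ b.2 := by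
  rw [mem_digSegNE] at ha hb
  obtain ⟨ha1, ha2, ha3⟩ := ha
  obtain ⟨hb1, hb2, hb3⟩ := hb
  have h1 : cnt prec p q (a.1 + a.2) ≤ cnt prec p q (b.1 + b.2) := cnt_mono prec p q hab
  have h2 := cnt_le prec p q ha1 hab
  omega

end Stair
section Restrict
variable (prec : ℤ → ℤ → Prop) [IsStrictTotalOrder ℤ prec]
open Classical Finset

lemma upAt_restrict {p q r s : ℤ × ℤ} (hr : r ∈ digSegNE prec p q) (hs : s ∈ digSegNE prec p q)
    (hrs : r.1 + r.2 ≤ s.1 + s.2) {t : ℤ} (ht : t ∈ Finset.Ico (r.1 + r.2) (s.1 + s.2)) :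
    upAt prec r s t ↔ upAt prec p q t := by
  have hmono := digSegNE_mono prec hr hs hrs
  rw [mem_digSegNE] at hr hs
  set J := Finset.Ico (r.1 + r.2) (s.1 + s.2) with hJ
  set U := J.filter (fun t => upAt prec p q t) with hU
  have hsplit := cnt_split prec p q hr.1 hrs
  have hUcard : (U.card : ℤ) = s.2 - r.2 := by
    rw [← hJ, ← hU] at hsplit
    omega
  have hup : ∀ u ∈ U, ∀ v ∈ J, (v = u ∨ prec u v) → v ∈ U := by
    intro u hu v hv h
    rw [hU, Finset.mem_filter] at hu ⊢
    refine ⟨hv, ?_⟩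
    have hrk := rk_anti prec (Finset.Ico (p.1 + p.2) (q.1 + q.2)) h
    rw [upAt_iff] at hu ⊢
    have := hu.2
    omega
  have hL1 := upset_eq prec J U (Finset.filter_subset _ _) hup
  constructor
  · intro h
    rw [upAt_iff, ← hJ] at h
    have htU : t ∈ U := by
      rw [hL1, Finset.mem_filter]
      exact ⟨ht, by omega⟩
    rw [hU, Finset.mem_filter] at htU
    exact htU.2
  · intro h
    have htU : t ∈ U := by rw [hU, Finset.mem_filter]; exact ⟨ht, h⟩
    rw [hL1, Finset.mem_filter] at htU
    rw [upAt_iff, ← hJ]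
    omega

lemma cnt_restrict {p q r s : ℤ × ℤ} (hr : r ∈ digSegNE prec p q) (hs : s ∈ digSegNE prec p q)
    (hrs : r.1 + r.2 ≤ s.1 + s.2) {w : ℤ} (h1 : r.1 + r.2 ≤ w) (h2 : w ≤ s.1 + s.2) :
    (cnt prec r s w : ℤ) = cnt prec p q w - cnt prec p q (r.1 + r.2) := by
  have heq : cnt prec r s w
      = ((Finset.Ico (r.1 + r.2) w).filter (fun t => upAt prec p q t)).card := by
    unfold cnt
    congr 1
    apply Finset.filter_congr
    intro t ht
    rw [Finset.mem_Ico] at ht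
    exact upAt_restrict prec hr hs hrs (Finset.mem_Ico.mpr ⟨ht.1, lt_of_lt_of_le ht.2 h2⟩)
  have hsplit := cnt_split prec p q (by rw [mem_digSegNE] at hr; exact hr.1) h1
  omega

lemma mem_digSegNE_sub {p q r s : ℤ × ℤ} (hr : r ∈ digSegNE prec p q)
    (hs : s ∈ digSegNE prec p q) (hrs : r.1 + r.2 ≤ s.1 + s.2) (a : ℤ × ℤ) :
    a ∈ digSegNE prec r s ↔
      a ∈ digSegNE prec p q ∧ r.1 + r.2 ≤ a.1 + a.2 ∧ a.1 + a.2 ≤ s.1 + s.2 := by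
  have hrm := hr; have hsm := hs
  rw [mem_digSegNE] at hrm hsm
  rw [mem_digSegNE, mem_digSegNE]
  constructor
  · rintro ⟨h1, h2, h3⟩
    have hc := cnt_restrict prec hr hs hrs h1 h2
    exact ⟨⟨by omega, by omega, by omega⟩, h1, h2⟩
  · rintro ⟨⟨h1, h2, h3⟩, h4, h5⟩
    have hc := cnt_restrict prec hr hs hrs h4 h5
    exact ⟨h4, h5, by omega⟩

end Restrict

section Degenerate
variable (prec : ℤ → ℤ → Prop) [IsStrictTotalOrder ℤ prec]
open Classical Finset

lemma digSegNE_horiz {p q : ℤ × ℤ} (h2 : p.2 = q.2) :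
    digSegNE prec p q = {a : ℤ × ℤ | p.1 ≤ a.1 ∧ a.1 ≤ q.1 ∧ a.2 = p.2} := by
  have hcnt : ∀ w, w ≤ q.1 + q.2 → cnt prec p q w = 0 := by
    intro w hw
    unfold cnt
    rw [Finset.card_eq_zero, Finset.filter_eq_empty_iff]
    intro t ht
    rw [Finset.mem_Ico] at ht
    have hpos := rk_pos prec (Finset.Ico (p.1 + p.2) (q.1 + q.2))
      (Finset.mem_Ico.mpr ⟨ht.1, by omega⟩)
    rw [upAt_iff]
    omega
  ext a
  rw [mem_digSegNE, Set.mem_setOf_eq]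
  constructor
  · rintro ⟨g1, g2, g3⟩
    have := hcnt (a.1 + a.2) g2
    omega
  · rintro ⟨g1, g2, g3⟩
    have := hcnt (a.1 + a.2) (by omega)
    omega

lemma digSegNE_vert {p q : ℤ × ℤ} (h1 : p.1 = q.1) :
    digSegNE prec p q = {a : ℤ × ℤ | a.1 = p.1 ∧ p.2 ≤ a.2 ∧ a.2 ≤ q.2} := by
  have hcnt : ∀ w, p.1 + p.2 ≤ w → w ≤ q.1 + q.2 → (cnt prec p q w : ℤ) = w - (p.1 + p.2) := by
    intro w hw1 hw2
    unfold cnt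
    have hfull : (Finset.Ico (p.1 + p.2) w).filter (fun t => upAt prec p q t)
        = Finset.Ico (p.1 + p.2) w := by
      rw [Finset.filter_eq_self]
      intro t ht
      rw [upAt_iff]
      have h3 := rk_le_card prec (Finset.Ico (p.1 + p.2) (q.1 + q.2)) t
      rw [Int.card_Ico] at h3
      omega
    rw [hfull, Int.card_Ico]
    omega
  ext a
  rw [mem_digSegNE, Set.mem_setOf_eq]
  constructor
  · rintro ⟨g1, g2, g3⟩
    have := hcnt (a.1 + a.2) g1 g2
    omega
  · rintro ⟨g1, g2, g3⟩
    have := hcnt (a.1 + a.2) (by omega) (by omega)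
    omega

lemma digSegNE_vert_image {c d : ℤ × ℤ} (h : c.1 = d.1) :
    digSegNE prec c d
      = (fun r : ℤ × ℤ => (-r.1, r.2)) '' digSegNE prec (-c.1, c.2) (-d.1, d.2) := by
  rw [digSegNE_vert prec h, digSegNE_vert prec (show ((-c.1 : ℤ), c.2).1 = ((-d.1 : ℤ), d.2).1 by
    simp [h])]
  ext a
  simp only [Set.mem_setOf_eq, Set.mem_image, Prod.ext_iff]
  constructor
  · rintro ⟨g1, g2, g3⟩
    exact ⟨(-a.1, a.2), ⟨by simp [g1], g2, g3⟩, by simp⟩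
  · rintro ⟨b, ⟨g1, g2, g3⟩, g4, g5⟩
    refine ⟨by omega, by rw [← g5]; exact ⟨g2, g3⟩⟩

lemma digSeg_comm (a b : ℤ × ℤ) : digSeg prec a b = digSeg prec b a := by
  unfold digSeg
  rcases lt_trichotomy a.1 b.1 with h | h | h
  · rw [if_pos h.le, if_neg (not_le.mpr h)]
  · rw [if_pos h.le, if_pos h.ge]
    unfold digSegAux
    rcases lt_trichotomy a.2 b.2 with h2 | h2 | h2
    · rw [if_pos h2.le, if_neg (not_le.mpr h2)]
      exact digSegNE_vert_image prec h
    · have : a = b := Prod.ext h h2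
      rw [this]
    · rw [if_neg (not_le.mpr h2), if_pos h2.le]
      exact (digSegNE_vert_image prec h.symm).symm
  · rw [if_neg (not_le.mpr h), if_pos h.le]

end Degenerate

section Geometry

lemma mink (a1 a2 b1 b2 c1 c2 : ℝ) (h1 : |a1| ≤ b1 + c1) (h2 : |a2| ≤ b2 + c2) :
    Real.sqrt (a1 ^ 2 + a2 ^ 2)
      ≤ Real.sqrt (b1 ^ 2 + b2 ^ 2) + Real.sqrt (c1 ^ 2 + c2 ^ 2) := by
  set B := Real.sqrt (b1 ^ 2 + b2 ^ 2) with hB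
  set C := Real.sqrt (c1 ^ 2 + c2 ^ 2) with hC
  have hB0 : 0 ≤ B := Real.sqrt_nonneg _
  have hC0 : 0 ≤ C := Real.sqrt_nonneg _
  have hB2 : B ^ 2 = b1 ^ 2 + b2 ^ 2 := Real.sq_sqrt (by positivity)
  have hC2 : C ^ 2 = c1 ^ 2 + c2 ^ 2 := Real.sq_sqrt (by positivity)
  have hBC2 : (B * C) ^ 2 = (b1 ^ 2 + b2 ^ 2) * (c1 ^ 2 + c2 ^ 2) := by
    rw [mul_pow, hB2, hC2]
  have hCS : b1 * c1 + b2 * c2 ≤ B * C := by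
    nlinarith [sq_nonneg (b1 * c2 - b2 * c1), mul_nonneg hB0 hC0,
      sq_nonneg (B * C - b1 * c1 - b2 * c2)]
  have e1 : a1 ^ 2 ≤ (b1 + c1) ^ 2 := by nlinarith [abs_nonneg a1, sq_abs a1]
  have e2 : a2 ^ 2 ≤ (b2 + c2) ^ 2 := by nlinarith [abs_nonneg a2, sq_abs a2]
  have key : a1 ^ 2 + a2 ^ 2 ≤ (B + C) ^ 2 := by nlinarith
  calc Real.sqrt (a1 ^ 2 + a2 ^ 2) ≤ Real.sqrt ((B + C) ^ 2) := Real.sqrt_le_sqrt key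
    _ = B + C := Real.sqrt_sq (by positivity)

lemma dist_coord (x y : EuclideanSpace ℝ (Fin 2)) :
    dist x y = Real.sqrt ((x 0 - y 0) ^ 2 + (x 1 - y 1) ^ 2) := by
  rw [EuclideanSpace.dist_eq, Fin.sum_univ_two]
  simp [Real.dist_eq, sq_abs]

lemma dist_le_add_of_coord (x y z u : EuclideanSpace ℝ (Fin 2))
    (h0 : |x 0 - z 0| ≤ |x 0 - y 0| + |u 0 - z 0|)
    (h1 : |x 1 - z 1| ≤ |x 1 - y 1| + |u 1 - z 1|) :
    dist x z ≤ dist x y + dist u z := by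
  have := mink (x 0 - z 0) (x 1 - z 1) (|x 0 - y 0|) (|x 1 - y 1|)
    (|u 0 - z 0|) (|u 1 - z 1|) h0 h1
  rw [dist_coord, dist_coord, dist_coord]
  simpa [sq_abs] using this

lemma dist_le_of_between (x z w : EuclideanSpace ℝ (Fin 2))
    (h0 : |x 0 - z 0| ≤ |x 0 - w 0|) (h1 : |x 1 - z 1| ≤ |x 1 - w 1|) :
    dist x z ≤ dist x w := by
  have := dist_le_add_of_coord x w z z (by simpa using h0) (by simpa using h1)
  simpa using this

lemma dist_combo (t : ℝ) (h0 : 0 ≤ t) (h1 : t ≤ 1) (a b c d : EuclideanSpace ℝ (Fin 2)) :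
    dist ((1 - t) • a + t • b) ((1 - t) • c + t • d)
      ≤ (1 - t) * dist a c + t * dist b d := by
  rw [dist_eq_norm, dist_eq_norm, dist_eq_norm]
  have he : ((1 - t) • a + t • b) - ((1 - t) • c + t • d)
      = (1 - t) • (a - c) + t • (b - d) := by module
  rw [he]
  refine le_trans (norm_add_le _ _) ?_
  rw [norm_smul, norm_smul, Real.norm_eq_abs, Real.norm_eq_abs,
    abs_of_nonneg (by linarith : (0:ℝ) ≤ 1 - t), abs_of_nonneg h0]

noncomputable def phiL : EuclideanSpace ℝ (Fin 2) →ₗ[ℝ] EuclideanSpace ℝ (Fin 2) where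
  toFun x := WithLp.toLp 2 ![-(x 0), x 1]
  map_add' x y := by
    ext i
    fin_cases i <;> simp [PiLp.add_apply] <;> ring
  map_smul' c x := by
    ext i
    fin_cases i <;> simp [PiLp.smul_apply, smul_eq_mul] <;> ring

lemma phiL_apply (x : EuclideanSpace ℝ (Fin 2)) : phiL x = WithLp.toLp 2 ![-(x 0), x 1] := rfl

lemma phiL_isometry : Isometry phiL := by
  apply Isometry.of_dist_eq
  intro x y
  rw [dist_coord, dist_coord, phiL_apply, phiL_apply]
  norm_num [Matrix.cons_val_zero, Matrix.cons_val_one]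
  ring_nf

lemma phiL_toR2 (a : ℤ × ℤ) : phiL (toR2 a) = toR2 (-a.1, a.2) := by
  ext i
  fin_cases i <;> simp [phiL_apply, toR2]

lemma phiL_segment (x y : EuclideanSpace ℝ (Fin 2)) :
    phiL '' segment ℝ x y = segment ℝ (phiL x) (phiL y) := by
  exact image_segment ℝ phiL.toAffineMap x y

lemma toR2_zero (a : ℤ × ℤ) : toR2 a 0 = (a.1 : ℝ) := rfl
lemma toR2_one (a : ℤ × ℤ) : toR2 a 1 = (a.2 : ℝ) := rfl

lemma combo_coord (t : ℝ) (x y : EuclideanSpace ℝ (Fin 2)) (i : Fin 2) :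
    ((1 - t) • x + t • y) i = (1 - t) * x i + t * y i := by
  simp [PiLp.add_apply, PiLp.smul_apply, smul_eq_mul]

end Geometry
section Haus
open Metric

lemma segment_compact (x y : EuclideanSpace ℝ (Fin 2)) : IsCompact (segment ℝ x y) := by
  rw [segment_eq_image]
  exact isCompact_Icc.image (by continuity)

lemma near_pt {A B : Set (EuclideanSpace ℝ (Fin 2))} (hA : IsCompact A) (hne : A.Nonempty)
    (hB : EMetric.hausdorffEdist B A ≠ ⊤) {x : EuclideanSpace ℝ (Fin 2)} (hx : x ∈ B) :
    ∃ y ∈ A, dist x y ≤ Metric.hausdorffDist B A := by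
  have h1 := Metric.infDist_le_hausdorffDist_of_mem hx hB
  obtain ⟨y, hy, he⟩ := hA.exists_infDist_eq_dist hne x
  exact ⟨y, hy, by rw [← he]; exact h1⟩

lemma digSegNE_finite (prec : ℤ → ℤ → Prop) (p q : ℤ × ℤ) : (digSegNE prec p q).Finite := by
  classical
  apply Set.Finite.subset (Set.Finite.image
    (f := fun w : ℤ => ((w - (p.2 + (cnt prec p q w : ℤ)), p.2 + (cnt prec p q w : ℤ)) : ℤ × ℤ))
    (Set.finite_Icc (p.1 + p.2) (q.1 + q.2)))
  intro a ha
  rw [mem_digSegNE] at ha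
  refine ⟨a.1 + a.2, Set.mem_Icc.mpr ⟨ha.1, ha.2.1⟩, ?_⟩
  have h3 := ha.2.2
  refine Prod.ext ?_ ?_ <;> simp <;> omega

end Haus

lemma abs_between_left {a b c : ℝ} (h1 : b ≤ c) (h2 : c ≤ a) : |a - c| ≤ |a - b| := by
  rw [abs_of_nonneg (by linarith), abs_of_nonneg (by linarith)]; linarith

lemma abs_between_right {a b c : ℝ} (h1 : a ≤ c) (h2 : c ≤ b) : |a - c| ≤ |a - b| := by
  rw [abs_of_nonpos (by linarith), abs_of_nonpos (by linarith)]; linarith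

lemma param_cases (α β γ : ℝ) :
    (∃ t : ℝ, 0 ≤ t ∧ t ≤ 1 ∧ α = (1 - t) * β + t * γ)
      ∨ (α < β ∧ α < γ) ∨ (β < α ∧ γ < α) := by
  by_cases hlo : α < β ∧ α < γ
  · exact Or.inr (Or.inl hlo)
  by_cases hhi : β < α ∧ γ < α
  · exact Or.inr (Or.inr hhi)
  push_neg at hlo hhi
  left
  rcases lt_trichotomy α β with h | h | h
  · have hγ : γ ≤ α := hlo h
    have hpos : 0 < β - γ := by linarith
    refine ⟨(β - α) / (β - γ), div_nonneg (by linarith) hpos.le,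
      (div_le_one hpos).mpr (by linarith), ?_⟩
    have hid : (β - α) / (β - γ) * (β - γ) = β - α := div_mul_cancel₀ _ (ne_of_gt hpos)
    nlinarith [hid]
  · exact ⟨0, le_rfl, zero_le_one, by linarith⟩
  · have hγ : α ≤ γ := hhi h
    have hpos : 0 < γ - β := by linarith
    refine ⟨(α - β) / (γ - β), div_nonneg (by linarith) hpos.le,
      (div_le_one hpos).mpr (by linarith), ?_⟩
    have hid : (α - β) / (γ - β) * (γ - β) = α - β := div_mul_cancel₀ _ (ne_of_gt hpos)
    nlinarith [hid]
lemma key_abs {ai ri yi yri : ℝ} (h1 : ri ≤ ai) (h2 : yi ≤ yri) :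
    |ai - ri| ≤ |ai - yi| + |yri - ri| := by
  rw [abs_of_nonneg (by linarith)]
  have l1 := le_abs_self (ai - yi)
  have l2 := le_abs_self (yri - ri)
  linarith

lemma key_abs' {ai si yi ysi : ℝ} (h1 : ai ≤ si) (h2 : ysi ≤ yi) :
    |ai - si| ≤ |ai - yi| + |ysi - si| := by
  rw [abs_of_nonpos (by linarith)]
  have l1 : yi - ai ≤ |ai - yi| := by rw [abs_sub_comm]; exact le_abs_self _
  have l2 : si - ysi ≤ |ysi - si| := by rw [abs_sub_comm]; exact le_abs_self _
  linarith

lemma NEmain (prec : ℤ → ℤ → Prop) [IsStrictTotalOrder ℤ prec] {p q r s : ℤ × ℤ}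
    (hx : p.1 ≤ q.1) (hy : p.2 ≤ q.2)
    (hr : r ∈ digSegNE prec p q) (hs : s ∈ digSegNE prec p q)
    (hrs : r.1 + r.2 ≤ s.1 + s.2) :
    Metric.hausdorffDist (segment ℝ (toR2 r) (toR2 s)) (toR2 '' digSegNE prec r s)
      ≤ 2 * Metric.hausdorffDist (segment ℝ (toR2 p) (toR2 q)) (toR2 '' digSegNE prec p q) := by
  classical
  have hpq : p.1 + p.2 ≤ q.1 + q.2 := by omega
  have hrm := (mem_digSegNE prec p q r).mp hr
  have hsm := (mem_digSegNE prec p q s).mp hs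
  have hcomp := digSegNE_mono prec hr hs hrs
  set H := Metric.hausdorffDist (segment ℝ (toR2 p) (toR2 q)) (toR2 '' digSegNE prec p q)
    with hH
  have hH0 : 0 ≤ H := Metric.hausdorffDist_nonneg
  have hSc : IsCompact (toR2 '' digSegNE prec p q) :=
    ((digSegNE_finite prec p q).image toR2).isCompact
  have hSne : (toR2 '' digSegNE prec p q).Nonempty :=
    ⟨toR2 p, Set.mem_image_of_mem _ (start_mem_digSegNE prec hpq)⟩
  have hsegc := segment_compact (toR2 p) (toR2 q)
  have hsegne : (segment ℝ (toR2 p) (toR2 q)).Nonempty := ⟨toR2 p, left_mem_segment ℝ _ _⟩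
  have hfin : EMetric.hausdorffEdist (segment ℝ (toR2 p) (toR2 q))
      (toR2 '' digSegNE prec p q) ≠ ⊤ :=
    Metric.hausdorffEdist_ne_top_of_nonempty_of_bounded hsegne hSne hsegc.isBounded
      hSc.isBounded
  have near1 : ∀ a ∈ digSegNE prec p q,
      ∃ y ∈ segment ℝ (toR2 p) (toR2 q), dist (toR2 a) y ≤ H := by
    intro a ha
    obtain ⟨y, hy1, hd⟩ := near_pt hsegc hsegne
      (ne_of_eq_of_ne Metric.hausdorffEDist_comm hfin) (Set.mem_image_of_mem toR2 ha)
    exact ⟨y, hy1, by rwa [Metric.hausdorffDist_comm] at hd⟩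
  have near2 : ∀ x ∈ segment ℝ (toR2 p) (toR2 q),
      ∃ b ∈ digSegNE prec p q, dist x (toR2 b) ≤ H := by
    intro x hx'
    obtain ⟨y, hy1, hd⟩ := near_pt hSc hSne hfin hx'
    obtain ⟨b, hb, rfl⟩ := hy1
    exact ⟨b, hb, hd⟩
  have hc1R : (r.1 : ℝ) ≤ (s.1 : ℝ) := by exact_mod_cast hcomp.1
  have hc2R : (r.2 : ℝ) ≤ (s.2 : ℝ) := by exact_mod_cast hcomp.2
  have hpq1R : (p.1 : ℝ) ≤ (q.1 : ℝ) := by exact_mod_cast hx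
  have hpq2R : (p.2 : ℝ) ≤ (q.2 : ℝ) := by exact_mod_cast hy
  apply Metric.hausdorffDist_le_of_infDist (by linarith)
  · -- every point of the segment r-s is close to the digital segment of r,s
    intro x hxseg
    rw [segment_eq_image] at hxseg
    obtain ⟨t, htI, hxeq0⟩ := hxseg
    have hxeq : (1 - t) • toR2 r + t • toR2 s = x := hxeq0
    obtain ⟨ht0, ht1⟩ := Set.mem_Icc.mp htI
    obtain ⟨yr, hyrmem, hyrd⟩ := near1 r hr
    obtain ⟨ys, hysmem, hysd⟩ := near1 s hs
    set y := (1 - t) • yr + t • ys with hydef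
    have hymem : y ∈ segment ℝ (toR2 p) (toR2 q) :=
      (convex_segment _ _) hyrmem hysmem (by linarith) ht0 (by ring)
    have hxy : dist x y ≤ H := by
      rw [← hxeq, hydef]
      have hcb := dist_combo t ht0 ht1 (toR2 r) (toR2 s) yr ys
      linarith [hcb, mul_nonneg ht0 (sub_nonneg.mpr hysd),
        mul_nonneg (by linarith : (0:ℝ) ≤ 1 - t) (sub_nonneg.mpr hyrd)]
    obtain ⟨b, hb, hbd⟩ := near2 y hymem
    have hx0 : x 0 = (1 - t) * (r.1 : ℝ) + t * (s.1 : ℝ) := by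
      rw [← hxeq, combo_coord]; rfl
    have hx1 : x 1 = (1 - t) * (r.2 : ℝ) + t * (s.2 : ℝ) := by
      rw [← hxeq, combo_coord]; rfl
    have h1t : (0:ℝ) ≤ 1 - t := by linarith
    have hxr0 : (r.1 : ℝ) ≤ x 0 := by
      rw [hx0]; linarith [mul_nonneg ht0 (sub_nonneg.mpr hc1R)]
    have hxr1 : (r.2 : ℝ) ≤ x 1 := by
      rw [hx1]; linarith [mul_nonneg ht0 (sub_nonneg.mpr hc2R)]
    have hxs0 : x 0 ≤ (s.1 : ℝ) := by
      rw [hx0]; linarith [mul_nonneg h1t (sub_nonneg.mpr hc1R)]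
    have hxs1 : x 1 ≤ (s.2 : ℝ) := by
      rw [hx1]; linarith [mul_nonneg h1t (sub_nonneg.mpr hc2R)]
    rcases lt_or_ge (b.1 + b.2) (r.1 + r.2) with hcase | hcase
    · -- b is before r : use r itself
      have hbr := digSegNE_mono prec hb hr hcase.le
      have hb0 : (b.1 : ℝ) ≤ (r.1 : ℝ) := by exact_mod_cast hbr.1
      have hb1 : (b.2 : ℝ) ≤ (r.2 : ℝ) := by exact_mod_cast hbr.2
      have hdle : dist x (toR2 r) ≤ dist x (toR2 b) :=
        dist_le_of_between x (toR2 r) (toR2 b)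
          (abs_between_left hb0 hxr0) (abs_between_left hb1 hxr1)
      have hrmem' : r ∈ digSegNE prec r s := start_mem_digSegNE prec hrs
      refine le_trans (Metric.infDist_le_dist_of_mem (Set.mem_image_of_mem toR2 hrmem')) ?_
      calc dist x (toR2 r) ≤ dist x (toR2 b) := hdle
        _ ≤ dist x y + dist y (toR2 b) := dist_triangle _ _ _
        _ ≤ 2 * H := by linarith
    rcases le_or_gt (b.1 + b.2) (s.1 + s.2) with hcase2 | hcase2
    · -- b is in the slab
      have hbmem : b ∈ digSegNE prec r s :=
        (mem_digSegNE_sub prec hr hs hrs b).mpr ⟨hb, hcase, hcase2⟩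
      refine le_trans (Metric.infDist_le_dist_of_mem (Set.mem_image_of_mem toR2 hbmem)) ?_
      calc dist x (toR2 b) ≤ dist x y + dist y (toR2 b) := dist_triangle _ _ _
        _ ≤ 2 * H := by linarith
    · -- b is after s : use s itself
      have hsb := digSegNE_mono prec hs hb hcase2.le
      have hb0 : (s.1 : ℝ) ≤ (b.1 : ℝ) := by exact_mod_cast hsb.1
      have hb1 : (s.2 : ℝ) ≤ (b.2 : ℝ) := by exact_mod_cast hsb.2
      have hdle : dist x (toR2 s) ≤ dist x (toR2 b) :=
        dist_le_of_between x (toR2 s) (toR2 b)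
          (abs_between_right hxs0 hb0) (abs_between_right hxs1 hb1)
      have hsmem' : s ∈ digSegNE prec r s := end_mem_digSegNE prec hcomp.1 hcomp.2
      refine le_trans (Metric.infDist_le_dist_of_mem (Set.mem_image_of_mem toR2 hsmem')) ?_
      calc dist x (toR2 s) ≤ dist x (toR2 b) := hdle
        _ ≤ dist x y + dist y (toR2 b) := dist_triangle _ _ _
        _ ≤ 2 * H := by linarith
  · -- every point of the digital segment of r,s is close to the segment r-s
    rintro z ⟨a, ha, rfl⟩
    have haslab := (mem_digSegNE_sub prec hr hs hrs a).mp ha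
    have hra := digSegNE_mono prec hr haslab.1 haslab.2.1
    have has := digSegNE_mono prec haslab.1 hs haslab.2.2
    have hra0 : (r.1 : ℝ) ≤ (a.1 : ℝ) := by exact_mod_cast hra.1
    have hra1 : (r.2 : ℝ) ≤ (a.2 : ℝ) := by exact_mod_cast hra.2
    have has0 : (a.1 : ℝ) ≤ (s.1 : ℝ) := by exact_mod_cast has.1
    have has1 : (a.2 : ℝ) ≤ (s.2 : ℝ) := by exact_mod_cast has.2
    obtain ⟨y, hymem, hyd⟩ := near1 a haslab.1
    obtain ⟨yr, hyrmem, hyrd⟩ := near1 r hr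
    obtain ⟨ys, hysmem, hysd⟩ := near1 s hs
    rw [segment_eq_image] at hymem hyrmem hysmem
    obtain ⟨α, hαI, hyα0⟩ := hymem
    obtain ⟨β, hβI, hyβ0⟩ := hyrmem
    obtain ⟨γ, hγI, hyγ0⟩ := hysmem
    have hyα : (1 - α) • toR2 p + α • toR2 q = y := hyα0
    have hyβ : (1 - β) • toR2 p + β • toR2 q = yr := hyβ0
    have hyγ : (1 - γ) • toR2 p + γ • toR2 q = ys := hyγ0
    have hy0 : y 0 = (1 - α) * (p.1 : ℝ) + α * (q.1 : ℝ) := by rw [← hyα, combo_coord]; rfl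
    have hy1 : y 1 = (1 - α) * (p.2 : ℝ) + α * (q.2 : ℝ) := by rw [← hyα, combo_coord]; rfl
    have hyr0 : yr 0 = (1 - β) * (p.1 : ℝ) + β * (q.1 : ℝ) := by rw [← hyβ, combo_coord]; rfl
    have hyr1 : yr 1 = (1 - β) * (p.2 : ℝ) + β * (q.2 : ℝ) := by rw [← hyβ, combo_coord]; rfl
    have hys0 : ys 0 = (1 - γ) * (p.1 : ℝ) + γ * (q.1 : ℝ) := by rw [← hyγ, combo_coord]; rfl
    have hys1 : ys 1 = (1 - γ) * (p.2 : ℝ) + γ * (q.2 : ℝ) := by rw [← hyγ, combo_coord]; rfl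
    rcases param_cases α β γ with ⟨t, ht0, ht1, hαt⟩ | ⟨hl1, hl2⟩ | ⟨hl1, hl2⟩
    · -- middle case
      have hz : (1 - t) • toR2 r + t • toR2 s ∈ segment ℝ (toR2 r) (toR2 s) := by
        rw [segment_eq_image]
        exact ⟨t, Set.mem_Icc.mpr ⟨ht0, ht1⟩, rfl⟩
      refine le_trans (Metric.infDist_le_dist_of_mem hz) ?_
      have hyc : y = (1 - t) • yr + t • ys := by
        rw [← hyα, ← hyβ, ← hyγ, hαt]
        module
      have hd2 : dist y ((1 - t) • toR2 r + t • toR2 s) ≤ H := by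
        rw [hyc]
        have hcb := dist_combo t ht0 ht1 yr ys (toR2 r) (toR2 s)
        have e1 : dist yr (toR2 r) ≤ H := by rw [dist_comm]; exact hyrd
        have e2 : dist ys (toR2 s) ≤ H := by rw [dist_comm]; exact hysd
        linarith [hcb, mul_nonneg ht0 (sub_nonneg.mpr e2),
          mul_nonneg (by linarith : (0:ℝ) ≤ 1 - t) (sub_nonneg.mpr e1)]
      calc dist (toR2 a) ((1 - t) • toR2 r + t • toR2 s)
          ≤ dist (toR2 a) y + dist y ((1 - t) • toR2 r + t • toR2 s) := dist_triangle _ _ _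
        _ ≤ 2 * H := by linarith
    · -- y is "before" both yr and ys : use r
      have hyy0 : y 0 ≤ yr 0 := by
        rw [hy0, hyr0]; linarith [mul_nonneg (by linarith : (0:ℝ) ≤ β - α) (sub_nonneg.mpr hpq1R)]
      have hyy1 : y 1 ≤ yr 1 := by
        rw [hy1, hyr1]; linarith [mul_nonneg (by linarith : (0:ℝ) ≤ β - α) (sub_nonneg.mpr hpq2R)]
      have hdle : dist (toR2 a) (toR2 r) ≤ dist (toR2 a) y + dist yr (toR2 r) :=
        dist_le_add_of_coord (toR2 a) y (toR2 r) yr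
          (key_abs hra0 hyy0) (key_abs hra1 hyy1)
      have e1 : dist yr (toR2 r) ≤ H := by rw [dist_comm]; exact hyrd
      refine le_trans (Metric.infDist_le_dist_of_mem
        (left_mem_segment ℝ (toR2 r) (toR2 s))) ?_
      linarith
    · -- y is "after" both yr and ys : use s
      have hyy0 : ys 0 ≤ y 0 := by
        rw [hy0, hys0]; linarith [mul_nonneg (by linarith : (0:ℝ) ≤ α - γ) (sub_nonneg.mpr hpq1R)]
      have hyy1 : ys 1 ≤ y 1 := by
        rw [hy1, hys1]; linarith [mul_nonneg (by linarith : (0:ℝ) ≤ α - γ) (sub_nonneg.mpr hpq2R)]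
      have hdle : dist (toR2 a) (toR2 s) ≤ dist (toR2 a) y + dist ys (toR2 s) :=
        dist_le_add_of_coord (toR2 a) y (toR2 s) ys
          (key_abs' has0 hyy0) (key_abs' has1 hyy1)
      have e1 : dist ys (toR2 s) ≤ H := by rw [dist_comm]; exact hysd
      refine le_trans (Metric.infDist_le_dist_of_mem
        (right_mem_segment ℝ (toR2 r) (toR2 s))) ?_
      linarith
section Reflect
variable (prec : ℤ → ℤ → Prop) [IsStrictTotalOrder ℤ prec]

lemma digSegNE_horiz_image {c d : ℤ × ℤ} (h : c.2 = d.2) :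
    digSegNE prec (-d.1, d.2) (-c.1, c.2)
      = (fun a : ℤ × ℤ => (-a.1, a.2)) '' digSegNE prec c d := by
  rw [digSegNE_horiz prec (show ((-d.1 : ℤ), d.2).2 = ((-c.1 : ℤ), c.2).2 by simp [h]),
    digSegNE_horiz prec h]
  ext a
  simp only [Set.mem_setOf_eq, Set.mem_image, Prod.ext_iff]
  constructor
  · rintro ⟨g1, g2, g3⟩
    exact ⟨(-a.1, a.2), ⟨by omega, by omega, by omega⟩, by simp⟩
  · rintro ⟨b, ⟨g1, g2, g3⟩, g4, g5⟩
    omega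

lemma digSeg_eq_NE {a b : ℤ × ℤ} (h1 : a.1 ≤ b.1) (h2 : a.2 ≤ b.2) :
    digSeg prec a b = digSegNE prec a b := by
  unfold digSeg digSegAux
  rw [if_pos h1, if_pos h2]

lemma digSeg_reflect {c d : ℤ × ℤ} (h1 : c.1 ≤ d.1) (h2 : c.2 ≤ d.2) :
    digSeg prec (-c.1, c.2) (-d.1, d.2)
      = (fun a : ℤ × ℤ => (-a.1, a.2)) '' digSegNE prec c d := by
  rcases lt_or_eq_of_le h1 with hlt | heq
  · have hfst : ¬ ((-c.1 : ℤ), c.2).1 ≤ ((-d.1 : ℤ), d.2).1 := by simp; omega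
    unfold digSeg
    rw [if_neg hfst]
    unfold digSegAux
    rcases lt_or_eq_of_le h2 with hlt2 | heq2
    · have : ¬ ((-d.1 : ℤ), d.2).2 ≤ ((-c.1 : ℤ), c.2).2 := by
        show ¬ (d.2 : ℤ) ≤ c.2; omega
      rw [if_neg this]
      simp only [neg_neg]
    · rw [if_pos (show ((-d.1 : ℤ), d.2).2 ≤ ((-c.1 : ℤ), c.2).2 from le_of_eq heq2.symm)]
      exact digSegNE_horiz_image prec heq2
  · have hfst : ((-c.1 : ℤ), c.2).1 ≤ ((-d.1 : ℤ), d.2).1 := by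
      show (-c.1 : ℤ) ≤ -d.1; omega
    unfold digSeg
    rw [if_pos hfst]
    unfold digSegAux
    rw [if_pos (show ((-c.1 : ℤ), c.2).2 ≤ ((-d.1 : ℤ), d.2).2 from h2)]
    have := digSegNE_vert_image prec (show ((-c.1 : ℤ), c.2).1 = ((-d.1 : ℤ), d.2).1 from
      by show (-c.1 : ℤ) = -d.1; omega)
    rw [this]
    simp only [neg_neg]

lemma haus_reflect (u v : ℤ × ℤ) (X : Set (ℤ × ℤ)) :
    Metric.hausdorffDist (segment ℝ (toR2 (-u.1, u.2)) (toR2 (-v.1, v.2)))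
        (toR2 '' ((fun a : ℤ × ℤ => (-a.1, a.2)) '' X))
      = Metric.hausdorffDist (segment ℝ (toR2 u) (toR2 v)) (toR2 '' X) := by
  have h1 : segment ℝ (toR2 (-u.1, u.2)) (toR2 (-v.1, v.2))
      = phiL '' segment ℝ (toR2 u) (toR2 v) := by
    rw [← phiL_toR2, ← phiL_toR2, ← phiL_segment]
  have h2 : toR2 '' ((fun a : ℤ × ℤ => (-a.1, a.2)) '' X) = phiL '' (toR2 '' X) := by
    rw [Set.image_image, Set.image_image]
    exact Set.image_congr (fun a _ => (phiL_toR2 a).symm)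
  rw [h1, h2, Metric.hausdorffDist_image phiL_isometry]

lemma reflect_case {P Q c d : ℤ × ℤ} (hPQ1 : P.1 ≤ Q.1) (hPQ2 : P.2 ≤ Q.2)
    (hc : c ∈ digSegNE prec P Q) (hd : d ∈ digSegNE prec P Q)
    (hsum : c.1 + c.2 ≤ d.1 + d.2) :
    Metric.hausdorffDist (segment ℝ (toR2 (-c.1, c.2)) (toR2 (-d.1, d.2)))
        (toR2 '' digSeg prec (-c.1, c.2) (-d.1, d.2))
      ≤ 2 * Metric.hausdorffDist (segment ℝ (toR2 P) (toR2 Q))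
          (toR2 '' digSegNE prec P Q) := by
  have hcomp := digSegNE_mono prec hc hd hsum
  rw [digSeg_reflect prec hcomp.1 hcomp.2, haus_reflect]
  exact NEmain prec hPQ1 hPQ2 hc hd hsum

lemma main_aux (p q r s : ℤ × ℤ) (hpq1 : p.1 ≤ q.1)
    (hr : r ∈ digSeg prec p q) (hs : s ∈ digSeg prec p q) :
    Metric.hausdorffDist (segment ℝ (toR2 r) (toR2 s)) (toR2 '' digSeg prec r s) ≤
      2 * Metric.hausdorffDist (segment ℝ (toR2 p) (toR2 q)) (toR2 '' digSeg prec p q) := by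
  rcases le_or_gt p.2 q.2 with hpq2 | hpq2
  · -- NE case
    rw [digSeg_eq_NE prec hpq1 hpq2] at hr hs ⊢
    rcases le_total (r.1 + r.2) (s.1 + s.2) with hsum | hsum
    · have hcomp := digSegNE_mono prec hr hs hsum
      rw [digSeg_eq_NE prec hcomp.1 hcomp.2]
      exact NEmain prec hpq1 hpq2 hr hs hsum
    · have hcomp := digSegNE_mono prec hs hr hsum
      rw [segment_symm, digSeg_comm prec r s, digSeg_eq_NE prec hcomp.1 hcomp.2]
      exact NEmain prec hpq1 hpq2 hs hr hsum
  · -- reflected case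
    have hseg : digSeg prec p q
        = (fun a : ℤ × ℤ => (-a.1, a.2)) '' digSegNE prec (-q.1, q.2) (-p.1, p.2) := by
      unfold digSeg digSegAux
      rw [if_pos hpq1, if_neg (not_le.mpr hpq2)]
    rw [hseg] at hr hs ⊢
    obtain ⟨c, hc, rfl⟩ := hr
    obtain ⟨d, hd, rfl⟩ := hs
    have hPQ1 : ((-q.1 : ℤ), q.2).1 ≤ ((-p.1 : ℤ), p.2).1 := by
      show (-q.1 : ℤ) ≤ -p.1; omega
    have hPQ2 : ((-q.1 : ℤ), q.2).2 ≤ ((-p.1 : ℤ), p.2).2 := by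
      show (q.2 : ℤ) ≤ p.2; omega
    have hrw : Metric.hausdorffDist (segment ℝ (toR2 p) (toR2 q))
        (toR2 '' ((fun a : ℤ × ℤ => (-a.1, a.2)) '' digSegNE prec (-q.1, q.2) (-p.1, p.2)))
        = Metric.hausdorffDist (segment ℝ (toR2 (-q.1, q.2)) (toR2 (-p.1, p.2)))
          (toR2 '' digSegNE prec (-q.1, q.2) (-p.1, p.2)) := by
      have h0 := haus_reflect ((-q.1 : ℤ), q.2) ((-p.1 : ℤ), p.2)
        (digSegNE prec ((-q.1 : ℤ), q.2) ((-p.1 : ℤ), p.2))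
      simp only [neg_neg, Prod.mk.eta] at h0
      rw [segment_symm ℝ (toR2 p) (toR2 q), h0]
    rw [hrw]
    rcases le_total (c.1 + c.2) (d.1 + d.2) with hsum | hsum
    · exact reflect_case prec hPQ1 hPQ2 hc hd hsum
    · rw [segment_symm, digSeg_comm prec]
      exact reflect_case prec hPQ1 hPQ2 hd hc hsum

end Reflect


theorem hausdorff_subsegment (prec : ℤ → ℤ → Prop) [IsStrictTotalOrder ℤ prec]
    (p q r s : ℤ × ℤ) (hr : r ∈ digSeg prec p q) (hs : s ∈ digSeg prec p q) :
    Metric.hausdorffDist (segment ℝ (toR2 r) (toR2 s)) (toR2 '' digSeg prec r s) ≤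
      2 * Metric.hausdorffDist (segment ℝ (toR2 p) (toR2 q)) (toR2 '' digSeg prec p q) := by
  rcases le_or_gt p.1 q.1 with h | h
  · exact main_aux prec p q r s h hr hs
  · rw [digSeg_comm prec p q] at hr hs
    rw [digSeg_comm prec p q, segment_symm ℝ (toR2 p) (toR2 q)]
    exact main_aux prec q p r s h.le hr hs
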